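/- Let γ: [0,∞) → (0,∞) be C^2 with γ(0) = γ'(0) = 1, γ increasing and γ'' < 0. Let t > 0 and let h: [0,t] → ℝ be continuous with |h(s)| ≤ -γ''(s)/γ(s). If y solves y'' = h·y on [0,t] with y(0) = y'(0) > 0, then y(s) > 0 for all s ∈ [0,t] and y(s) ≤ γ(s) y(t)/γ(t) for all s ∈ [0,t]; moreover y(s)/γ(s) is nondecreasing on [0,t]. -/

import Mathlib

theorem ode_comparison_positive
    (γ : ℝ → ℝ) (hγC2 : ContDiff ℝ 2 γ)
    (hγpos : ∀ s : ℝ, 0 ≤ s → 0 < γ s)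
    (hγ0 : γ 0 = 1) (hγ'0 : deriv γ 0 = 1)
    (hγmono : MonotoneOn γ (Set.Ici 0))
    (hγ'' : ∀ s : ℝ, 0 ≤ s → deriv (deriv γ) s < 0)
    (t : ℝ) (ht : 0 < t)
    (h y y' : ℝ → ℝ) (hcont : ContinuousOn h (Set.Icc 0 t))
    (hbound : ∀ s ∈ Set.Icc 0 t, |h s| ≤ -(deriv (deriv γ) s) / γ s)
    (hy : ∀ s ∈ Set.Icc 0 t, HasDerivAt y (y' s) s)
    (hy' : ∀ s ∈ Set.Icc 0 t, HasDerivAt y' (h s * y s) s)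
    (hinit : y 0 = y' 0) (hinitpos : 0 < y 0) :
    (∀ s ∈ Set.Icc 0 t, 0 < y s ∧ y s ≤ γ s * y t / γ t) ∧
      MonotoneOn (fun s => y s / γ s) (Set.Icc 0 t) := by
  -- differentiability of γ and deriv γ
  have hγ2 : ContDiff ℝ ((1:ℕ) + 1) γ := by exact_mod_cast hγC2
  have hγdiff : Differentiable ℝ γ := (contDiff_succ_iff_deriv.mp hγ2).1
  have hγ'diff : Differentiable ℝ (deriv γ) :=
    (contDiff_succ_iff_deriv.mp hγ2).2.2.differentiable (by simp)
  set W : ℝ → ℝ := fun s => y' s * γ s - y s * deriv γ s with hWdef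
  have hW : ∀ s ∈ Set.Icc (0:ℝ) t,
      HasDerivAt W (y s * (h s * γ s - deriv (deriv γ) s)) s := by
    intro s hs
    have h1 := ((hy' s hs).mul (hγdiff s).hasDerivAt).sub
      ((hy s hs).mul (hγ'diff s).hasDerivAt)
    convert (show HasDerivAt W _ s from h1) using 1
    ring
  -- the derivative factor is nonnegative
  have hfac : ∀ s ∈ Set.Icc (0:ℝ) t, 0 ≤ h s * γ s - deriv (deriv γ) s := by
    intro s hs
    have hγs : 0 < γ s := hγpos s hs.1
    have hb := hbound s hs
    have h1 : |h s| * γ s ≤ -(deriv (deriv γ) s) := by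
      rw [← le_div_iff₀ hγs]; exact hb
    have h2 : -(|h s| * γ s) ≤ h s * γ s := by
      have := neg_abs_le (h s)
      nlinarith
    linarith
  have hWpos : W 0 = 0 := by
    simp only [hWdef, hγ0, hγ'0, hinit]; ring
  -- key: positivity on [0,c) gives monotonicity of y/γ on [0,c]
  have key : ∀ c : ℝ, 0 < c → c ≤ t → (∀ s, 0 ≤ s → s < c → 0 < y s) →
      MonotoneOn (fun s => y s / γ s) (Set.Icc 0 c) := by
    intro c hc hct hpos
    have hsub : Set.Icc (0:ℝ) c ⊆ Set.Icc 0 t :=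
      Set.Icc_subset_Icc le_rfl hct
    have hWmono : MonotoneOn W (Set.Icc 0 c) := by
      apply monotoneOn_of_deriv_nonneg (convex_Icc 0 c)
      · intro s hs
        exact (hW s (hsub hs)).continuousAt.continuousWithinAt
      · intro s hs
        rw [interior_Icc] at hs
        exact ((hW s (hsub (Set.mem_Icc_of_Ioo hs))).differentiableAt).differentiableWithinAt
      · intro s hs
        rw [interior_Icc] at hs
        have hs' := hsub (Set.mem_Icc_of_Ioo hs)
        rw [(hW s hs').deriv]
        exact mul_nonneg (hpos s hs.1.le hs.2).le (hfac s hs')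
    have hWnn : ∀ s ∈ Set.Icc (0:ℝ) c, 0 ≤ W s := by
      intro s hs
      have := hWmono (Set.left_mem_Icc.mpr hc.le) hs hs.1
      rw [hWpos] at this; exact this
    apply monotoneOn_of_deriv_nonneg (convex_Icc 0 c)
    · intro s hs
      have hs' := hsub hs
      exact (((hy s hs').div (hγdiff s).hasDerivAt
        (hγpos s hs.1).ne')).continuousAt.continuousWithinAt
    · intro s hs
      rw [interior_Icc] at hs
      have hs' := hsub (Set.mem_Icc_of_Ioo hs)
      exact ((hy s hs').div (hγdiff s).hasDerivAt
        (hγpos s hs.1.le).ne').differentiableAt.differentiableWithinAt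
    · intro s hs
      rw [interior_Icc] at hs
      have hs0 : (0:ℝ) ≤ s := hs.1.le
      have hs' := hsub (Set.mem_Icc_of_Ioo hs)
      rw [(show HasDerivAt (fun s => y s / γ s) _ s from
        (hy s hs').div (hγdiff s).hasDerivAt (hγpos s hs0).ne').deriv]
      apply div_nonneg
      · exact hWnn s (Set.mem_Icc_of_Ioo hs)
      · positivity
  -- positivity of y on [0,t]
  have ypos : ∀ s ∈ Set.Icc (0:ℝ) t, 0 < y s := by
    by_contra hcon
    push_neg at hcon
    obtain ⟨s₀, hs₀, hys₀⟩ := hcon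
    set A : Set ℝ := {s | s ∈ Set.Icc (0:ℝ) t ∧ y s ≤ 0} with hA
    have hAne : A.Nonempty := ⟨s₀, hs₀, hys₀⟩
    have hAbdd : BddBelow A := ⟨0, fun a ha => ha.1.1⟩
    set c := sInf A with hc
    have hc0 : 0 ≤ c := le_csInf hAne fun a ha => ha.1.1
    have hct : c ≤ t := le_trans (csInf_le hAbdd hAne.choose_spec) hAne.choose_spec.1.2
    have hcIcc : c ∈ Set.Icc (0:ℝ) t := ⟨hc0, hct⟩
    -- y c ≤ 0
    have hyc : y c ≤ 0 := by
      by_contra hyc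
      push_neg at hyc
      have hcont : ContinuousAt y c := (hy c hcIcc).continuousAt
      have hev : y ⁻¹' Set.Ioi 0 ∈ nhds c := hcont (Ioi_mem_nhds hyc)
      obtain ⟨δ, hδ, hball⟩ := Metric.mem_nhds_iff.mp hev
      obtain ⟨a, haA, halt⟩ := (csInf_lt_iff hAbdd hAne).mp
        (show sInf A < c + δ by linarith)
      have hac : c ≤ a := csInf_le hAbdd haA
      have : a ∈ Metric.ball c δ := by
        rw [Metric.mem_ball, Real.dist_eq, abs_of_nonneg (by linarith)]
        linarith
      have := hball this
      exact absurd haA.2 (not_le.mpr this)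
    have hcpos : 0 < c := by
      rcases lt_or_eq_of_le hc0 with h' | h'
      · exact h'
      · exfalso; rw [← h'] at hyc; linarith
    have hposlt : ∀ s, 0 ≤ s → s < c → 0 < y s := by
      intro s hs0 hsc
      by_contra hys
      push_neg at hys
      have : c ≤ s := csInf_le hAbdd ⟨⟨hs0, le_trans hsc.le hct⟩, hys⟩
      linarith
    have hmono := key c hcpos hct hposlt
    have := hmono (Set.left_mem_Icc.mpr hcpos.le) (Set.right_mem_Icc.mpr hcpos.le) hcpos.le
    simp only [hγ0, div_one] at this
    have hγc : 0 < γ c := hγpos c hc0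
    have h3 := div_nonpos_of_nonpos_of_nonneg hyc hγc.le
    linarith
  have hposlt : ∀ s, 0 ≤ s → s < t → 0 < y s := fun s hs0 hst =>
    ypos s ⟨hs0, hst.le⟩
  have hmono := key t ht le_rfl hposlt
  refine ⟨fun s hs => ⟨ypos s hs, ?_⟩, hmono⟩
  have h1 : y s / γ s ≤ y t / γ t :=
    hmono hs (Set.right_mem_Icc.mpr ht.le) hs.2
  have hγs : 0 < γ s := hγpos s hs.1
  have hγt : 0 < γ t := hγpos t ht.le
  rw [div_le_div_iff₀ hγs hγt] at h1
  rw [le_div_iff₀ hγt]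
  nlinarith
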